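/- arXiv:2407.21362 — 3 statements merged into one kernel-verified Lean document; each statement's English description precedes it below -/
import Mathlib

section
/- Let p be a prime, q = p^n, and D ⊆ 𝔽_q*. Let f : 𝔽_q → 𝔽_q be an additive bijection with f(0) = 0 such that f(x)/x ∈ D for all x ∈ 𝔽_q*. Define g(0) = 0 and g(x) = 1/f(x⁻¹) for x ≠ 0. Then every direction determined by g, i.e. every value (g(x)-g(y))/(x-y) with x ≠ y, lies in D·D⁻¹·D⁻¹. -/
open Pointwise

theorem stmt_3 {p n : ℕ} (hp : p.Prime) (hn : 0 < n)
    {F : Type*} [Field F] [Fintype F] (hF : Fintype.card F = p ^ n)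
    (D : Set F) (hD : D ⊆ {0}ᶜ)
    (f : F → F) (hadd : ∀ u v : F, f (u + v) = f u + f v)
    (hbij : Function.Bijective f) (hf0 : f 0 = 0)
    (hfD : ∀ x : F, x ≠ 0 → f x / x ∈ D)
    (g : F → F) (hg0 : g 0 = 0) (hg : ∀ x : F, x ≠ 0 → g x = (f x⁻¹)⁻¹) :
    ∀ x y : F, x ≠ y → (g x - g y) / (x - y) ∈ D * D⁻¹ * D⁻¹ := by
  have key : ∀ d₁ ∈ D, ∀ d₂ ∈ D, ∀ d₃ ∈ D, d₁ * d₂⁻¹ * d₃⁻¹ ∈ D * D⁻¹ * D⁻¹ := by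
    intro d₁ h₁ d₂ h₂ d₃ h₃
    exact Set.mul_mem_mul (Set.mul_mem_mul h₁ (Set.inv_mem_inv.mpr h₂))
      (Set.inv_mem_inv.mpr h₃)
  have hne : ∀ d ∈ D, d ≠ 0 := fun d hd => hD hd
  intro x y hxy
  rcases eq_or_ne x 0 with rfl | hx
  · have hy : y ≠ 0 := fun h => hxy h.symm
    have h₂ := hfD y⁻¹ (inv_ne_zero hy)
    set d := f y⁻¹ / y⁻¹ with hdval
    clear_value d
    have hd : d ≠ 0 := hne _ h₂
    have hfy : f y⁻¹ = d * y⁻¹ := by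
      rw [hdval, div_mul_cancel₀ _ (inv_ne_zero hy)]
    rw [hg0, hg y hy, hfy]
    have heq : (0 - (d * y⁻¹)⁻¹) / (0 - y) = d * d⁻¹ * d⁻¹ := by
      field_simp
      ring
    rw [heq]
    exact key d h₂ d h₂ d h₂
  · rcases eq_or_ne y 0 with rfl | hy
    · have h₂ := hfD x⁻¹ (inv_ne_zero hx)
      set d := f x⁻¹ / x⁻¹ with hdval
      clear_value d
      have hd : d ≠ 0 := hne _ h₂
      have hfx : f x⁻¹ = d * x⁻¹ := by
        rw [hdval, div_mul_cancel₀ _ (inv_ne_zero hx)]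
      rw [hg0, hg x hx, hfx]
      have heq : ((d * x⁻¹)⁻¹ - 0) / (x - 0) = d * d⁻¹ * d⁻¹ := by
        field_simp
        ring
      rw [heq]
      exact key d h₂ d h₂ d h₂
    · -- both nonzero
      have hxinv : x⁻¹ ≠ y⁻¹ := fun h => hxy (inv_injective h)
      have hu : y⁻¹ - x⁻¹ ≠ 0 := sub_ne_zero.mpr (Ne.symm hxinv)
      have h₁ := hfD _ hu
      have h₂ := hfD x⁻¹ (inv_ne_zero hx)
      have h₃ := hfD y⁻¹ (inv_ne_zero hy)
      set d₁ := f (y⁻¹ - x⁻¹) / (y⁻¹ - x⁻¹) with hd1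
      set d₂ := f x⁻¹ / x⁻¹ with hd2
      set d₃ := f y⁻¹ / y⁻¹ with hd3
      clear_value d₁ d₂ d₃
      have hnd₁ : d₁ ≠ 0 := hne _ h₁
      have hnd₂ : d₂ ≠ 0 := hne _ h₂
      have hnd₃ : d₃ ≠ 0 := hne _ h₃
      have hfu : f (y⁻¹ - x⁻¹) = d₁ * (y⁻¹ - x⁻¹) := by
        rw [hd1, div_mul_cancel₀ _ hu]
      have hfx : f x⁻¹ = d₂ * x⁻¹ := by
        rw [hd2, div_mul_cancel₀ _ (inv_ne_zero hx)]
      have hfy : f y⁻¹ = d₃ * y⁻¹ := by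
        rw [hd3, div_mul_cancel₀ _ (inv_ne_zero hy)]
      have hadd' : f (y⁻¹ - x⁻¹) = f y⁻¹ - f x⁻¹ := by
        have := hadd (y⁻¹ - x⁻¹) x⁻¹
        rw [sub_add_cancel] at this
        linear_combination -this
      have hrel : d₁ * (y⁻¹ - x⁻¹) = d₃ * y⁻¹ - d₂ * x⁻¹ := by
        rw [← hfu, ← hfx, ← hfy, hadd']
      rw [hg x hx, hg y hy, hfx, hfy]
      have hsub : x - y ≠ 0 := sub_ne_zero.mpr hxy
      have heq : ((d₂ * x⁻¹)⁻¹ - (d₃ * y⁻¹)⁻¹) / (x - y) = d₁ * d₂⁻¹ * d₃⁻¹ := by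
        have hrel' : d₁ * (x - y) = d₃ * x - d₂ * y := by
          have h := hrel
          field_simp at h
          linear_combination h
        field_simp
        linear_combination -hrel'
      rw [heq]
      exact key d₁ h₁ d₂ h₂ d₃ h₃
end

section
/- Let p be a prime, q = p^n. Suppose f(x) = Σ_{j=0}^{n-1} α_j x^(p^j) and g(x) = Σ_{j=0}^{n-1} β_j x^(p^j) are linearized polynomials over 𝔽_q such that f(x⁻¹)·g(x) = 1 for all x ∈ 𝔽_q*. Then the polynomial identity (Σ_j α_j X^(p^(n-1) - p^j))·(Σ_j β_j X^(p^j - 1)) = X^(p^(n-1) - 1) holds in 𝔽_q[X]. -/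
open Polynomial

theorem stmt_4 {p n : ℕ} (hp : p.Prime) (hn : 0 < n)
    {F : Type*} [Field F] [Fintype F] (hF : Fintype.card F = p ^ n)
    (α β : ℕ → F)
    (h : ∀ x : F, x ≠ 0 →
      (∑ j ∈ Finset.range n, α j * (x⁻¹) ^ (p ^ j)) *
        (∑ j ∈ Finset.range n, β j * x ^ (p ^ j)) = 1) :
    (∑ j ∈ Finset.range n, C (α j) * (X : F[X]) ^ (p ^ (n - 1) - p ^ j)) *
      (∑ j ∈ Finset.range n, C (β j) * (X : F[X]) ^ (p ^ j - 1)) =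
        (X : F[X]) ^ (p ^ (n - 1) - 1) := by
  classical
  have hp2 : 2 ≤ p := hp.two_le
  set A : F[X] := ∑ j ∈ Finset.range n, C (α j) * (X : F[X]) ^ (p ^ (n - 1) - p ^ j) with hA
  set B : F[X] := ∑ j ∈ Finset.range n, C (β j) * (X : F[X]) ^ (p ^ j - 1) with hB
  set P : F[X] := A * B - (X : F[X]) ^ (p ^ (n - 1) - 1) with hP
  have hdA : A.natDegree ≤ p ^ (n - 1) - 1 := by
    apply Polynomial.natDegree_sum_le_of_forall_le
    intro j hj
    refine le_trans (Polynomial.natDegree_C_mul_le _ _) ?_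
    rw [Polynomial.natDegree_X_pow]
    exact Nat.sub_le_sub_left (Nat.one_le_pow _ _ hp.pos) _
  have hdB : B.natDegree ≤ p ^ (n - 1) - 1 := by
    apply Polynomial.natDegree_sum_le_of_forall_le
    intro j hj
    refine le_trans (Polynomial.natDegree_C_mul_le _ _) ?_
    rw [Polynomial.natDegree_X_pow]
    exact Nat.sub_le_sub_right (Nat.pow_le_pow_right hp.pos
      (Nat.le_sub_one_of_lt (Finset.mem_range.mp hj))) 1
  have hdP : P.natDegree < p ^ n - 1 := by
    have h1 : 1 ≤ p ^ (n - 1) := Nat.one_le_pow _ _ hp.pos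
    have hlt : 2 * (p ^ (n - 1) - 1) < p ^ n - 1 := by
      have he : p ^ n = p * p ^ (n - 1) := by
        rw [← pow_succ']
        congr 1
        omega
      have h2 : 2 * p ^ (n - 1) ≤ p ^ n := by
        rw [he]; exact Nat.mul_le_mul_right _ hp2
      omega
    refine lt_of_le_of_lt (Polynomial.natDegree_sub_le _ _) ?_
    rw [Polynomial.natDegree_X_pow]
    have hAB : (A * B).natDegree ≤ 2 * (p ^ (n - 1) - 1) := by
      refine le_trans (Polynomial.natDegree_mul_le) ?_
      omega
    simp only [max_lt_iff]
    constructor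
    · omega
    · omega
  have hPz : P = 0 := by
    apply Polynomial.eq_zero_of_natDegree_lt_card_of_eval_eq_zero' P
      (Finset.univ \ {0})
    · intro x hx
      have hx0 : x ≠ 0 := by
        simp only [Finset.mem_sdiff, Finset.mem_singleton] at hx
        exact hx.2
      have hevalA : A.eval x = x ^ (p ^ (n - 1)) *
          ∑ j ∈ Finset.range n, α j * (x⁻¹) ^ (p ^ j) := by
        rw [hA, Polynomial.eval_finset_sum, Finset.mul_sum]
        refine Finset.sum_congr rfl fun j hj => ?_
        have hle : p ^ j ≤ p ^ (n - 1) :=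
          Nat.pow_le_pow_right hp.pos (Nat.le_sub_one_of_lt (Finset.mem_range.mp hj))
        rw [Polynomial.eval_mul, Polynomial.eval_C, Polynomial.eval_pow, Polynomial.eval_X,
          pow_sub₀ x hx0 hle, inv_pow]
        ring
      have hevalB : B.eval x =
          (∑ j ∈ Finset.range n, β j * x ^ (p ^ j)) * x⁻¹ := by
        rw [hB, Polynomial.eval_finset_sum, Finset.sum_mul]
        refine Finset.sum_congr rfl fun j hj => ?_
        have hle : 1 ≤ p ^ j := Nat.one_le_pow _ _ hp.pos
        rw [Polynomial.eval_mul, Polynomial.eval_C, Polynomial.eval_pow, Polynomial.eval_X,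
          pow_sub₀ x hx0 hle, pow_one]
        ring
      rw [hP, Polynomial.eval_sub, Polynomial.eval_mul, hevalA, hevalB,
        Polynomial.eval_pow, Polynomial.eval_X]
      have hkey := h x hx0
      have h1 : 1 ≤ p ^ (n - 1) := Nat.one_le_pow _ _ hp.pos
      rw [pow_sub₀ x hx0 h1, pow_one]
      calc x ^ p ^ (n - 1) * (∑ j ∈ Finset.range n, α j * x⁻¹ ^ p ^ j) *
            ((∑ j ∈ Finset.range n, β j * x ^ p ^ j) * x⁻¹) - x ^ p ^ (n - 1) * x⁻¹
          = x ^ p ^ (n - 1) * x⁻¹ *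
            ((∑ j ∈ Finset.range n, α j * x⁻¹ ^ p ^ j) *
              (∑ j ∈ Finset.range n, β j * x ^ p ^ j)) - x ^ p ^ (n - 1) * x⁻¹ := by ring
        _ = 0 := by rw [hkey, mul_one, sub_self]
    · have hc : (Finset.univ \ ({0} : Finset F)).card = p ^ n - 1 := by
        rw [Finset.card_sdiff_of_subset (by simp), Finset.card_univ, hF, Finset.card_singleton]
      omega
  exact sub_eq_zero.mp hPz
end

section
/- Let p be a prime, q = p^n, and let f(X) = Σ_{j=0}^{n-1} α_j X^(p^j), g(X) = Σ_{j=0}^{n-1} β_j X^(p^j) be linearized polynomials over 𝔽_q whose induced maps on 𝔽_q satisfy g(x)·f(x⁻¹) = 1 for all x ∈ 𝔽_q*. Then there exist γ ∈ 𝔽_q* and 0 ≤ j ≤ n-1 such that g(x) = γ x^(p^j) and f(x) = γ⁻¹ x^(p^j) for all x ∈ 𝔽_q. -/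
open Polynomial Finset

theorem stmt_16 {p n : ℕ} (hp : p.Prime) (hn : 0 < n)
    {F : Type*} [Field F] [Fintype F] (hF : Fintype.card F = p ^ n)
    (α β : ℕ → F)
    (f g : F → F)
    (hf : ∀ x : F, f x = ∑ j ∈ Finset.range n, α j * x ^ (p ^ j))
    (hg : ∀ x : F, g x = ∑ j ∈ Finset.range n, β j * x ^ (p ^ j))
    (h : ∀ x : F, x ≠ 0 → g x * f x⁻¹ = 1) :
    ∃ γ : F, γ ≠ 0 ∧ ∃ j : ℕ, j ≤ n - 1 ∧
      (∀ x : F, g x = γ * x ^ (p ^ j)) ∧ (∀ x : F, f x = γ⁻¹ * x ^ (p ^ j)) := by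
  have hp2 : 2 ≤ p := hp.two_le
  set m := p ^ (n - 1) with hm
  have hmn : m * p = p ^ n := by
    rw [hm, ← pow_succ, Nat.sub_add_cancel hn]
  have hple : ∀ j, j ∈ Finset.range n → p ^ j ≤ m := by
    intro j hj
    exact Nat.pow_le_pow_right hp.one_lt.le (Nat.le_pred_of_lt (Finset.mem_range.mp hj))
  set G : Polynomial F := ∑ j ∈ Finset.range n, C (β j) * X ^ (p ^ j) with hG
  set A : Polynomial F := ∑ j ∈ Finset.range n, C (α j) * X ^ (m - p ^ j) with hA
  -- evaluation of G
  have hGeval : ∀ x : F, G.eval x = g x := by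
    intro x
    rw [hG, hg]
    simp [eval_finset_sum]
  have hAeval : ∀ x : F, x ≠ 0 → A.eval x = x ^ m * f x⁻¹ := by
    intro x hx
    rw [hA, hf]
    rw [eval_finset_sum, Finset.mul_sum]
    apply Finset.sum_congr rfl
    intro j hj
    simp only [eval_mul, eval_C, eval_pow, eval_X]
    rw [pow_sub₀ x hx (hple j hj)]
    rw [inv_pow]
    ring
  have hkey : G * A = X ^ m := by
    have hmne : m ≠ 0 := by positivity
    have heval : ∀ x : F, (G * A - X ^ m).eval x = 0 := by
      intro x
      rcases eq_or_ne x 0 with rfl | hx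
      · have : g 0 = 0 := by
          rw [hg]
          apply Finset.sum_eq_zero
          intro j hj
          have : (0:F) ^ (p ^ j) = 0 := zero_pow (by positivity)
          rw [this, mul_zero]
        simp [hGeval, this, zero_pow hmne]
      · rw [eval_sub, eval_mul, hGeval, hAeval x hx, eval_pow, eval_X]
        have := h x hx
        rw [show g x * (x ^ m * f x⁻¹) = x ^ m * (g x * f x⁻¹) by ring, this, mul_one,
          sub_self]
    have hdeg : (G * A - X ^ m).natDegree < Fintype.card F := by
      have hdG : G.natDegree ≤ m := by
        apply natDegree_sum_le_of_forall_le
        intro j hj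
        exact (natDegree_C_mul_X_pow_le _ _).trans (hple j hj)
      have hdA : A.natDegree ≤ m - 1 := by
        apply natDegree_sum_le_of_forall_le
        intro j hj
        refine (natDegree_C_mul_X_pow_le _ _).trans ?_
        have : 1 ≤ p ^ j := Nat.one_le_pow _ _ hp.pos
        omega
      have hdGA : (G * A).natDegree ≤ m + (m - 1) := by
        exact natDegree_mul_le.trans (Nat.add_le_add hdG hdA)
      have hlt : m + (m - 1) < p ^ n := by
        have h2 : m * 2 ≤ m * p := Nat.mul_le_mul_left m hp2
        have hm1 : 1 ≤ m := Nat.one_le_pow _ _ hp.pos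
        omega
      refine (natDegree_sub_le _ _).trans_lt ?_
      rw [hF]
      have hXm : (X ^ m : Polynomial F).natDegree ≤ m := natDegree_X_pow_le m
      have : m < p ^ n := by nlinarith [Nat.one_le_pow (n-1) p hp.pos]
      omega
    have := Polynomial.eq_zero_of_natDegree_lt_card_of_eval_eq_zero
      (G * A - X ^ m) (Function.injective_id (α := F)) (fun i => heval i) hdeg
    linear_combination (norm := ring_nf) this
  -- G divides X ^ m, so G is a unit times a power of X
  have hdvd : G ∣ X ^ m := ⟨A, hkey.symm⟩
  obtain ⟨i, hi, hassoc⟩ := (dvd_prime_pow Polynomial.prime_X m).mp hdvd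
  obtain ⟨u, hu⟩ := hassoc
  obtain ⟨c, hcunit, hc⟩ := Polynomial.isUnit_iff.mp u.isUnit
  have hcne : c ≠ 0 := hcunit.ne_zero
  set γ := c⁻¹ with hγ
  have hγne : γ ≠ 0 := inv_ne_zero hcne
  have hGeq : G = C γ * X ^ i := by
    have : G * C c = X ^ i := by rw [hc]; exact hu
    have h2 : G * C c * C γ = X ^ i * C γ := by rw [this]
    rw [mul_assoc, ← C_mul, mul_inv_cancel₀ hcne, C_1, mul_one] at h2
    rw [h2]; ring
  -- coefficients of G
  have hcoeff : ∀ k : ℕ, G.coeff k = ∑ j ∈ Finset.range n, β j * (if k = p ^ j then 1 else 0) := by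
    intro k
    rw [hG, finset_sum_coeff]
    apply Finset.sum_congr rfl
    intro j hj
    rw [coeff_C_mul, coeff_X_pow]
  have hpinj : Function.Injective (fun j : ℕ => p ^ j) := fun a b hab =>
    Nat.pow_right_injective hp2 hab
  -- G.coeff i = γ ≠ 0 so i = p ^ j for some j < n
  have hci : G.coeff i = γ := by
    rw [hGeq, coeff_C_mul, coeff_X_pow, if_pos rfl, mul_one]
  obtain ⟨j, hjn, hij⟩ : ∃ j, j ∈ Finset.range n ∧ i = p ^ j := by
    by_contra hcon
    push_neg at hcon
    have : G.coeff i = 0 := by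
      rw [hcoeff]
      apply Finset.sum_eq_zero
      intro j hj
      rw [if_neg (hcon j hj), mul_zero]
    exact hγne (this ▸ hci).symm
  have hjn' : j < n := Finset.mem_range.mp hjn
  -- coefficient extraction: G.coeff (p ^ j') = β j' for j' < n
  have hcoeff' : ∀ j' ∈ Finset.range n, G.coeff (p ^ j') = β j' := by
    intro j' hj'
    rw [hcoeff]
    rw [Finset.sum_eq_single j']
    · rw [if_pos rfl, mul_one]
    · intro b hb hbne
      rw [if_neg, mul_zero]
      intro hb'
      exact hbne (hpinj hb').symm
    · intro hj''
      exact absurd hj' hj''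
  have hβj : β j = γ := by rw [← hcoeff' j hjn, ← hij, hci]
  have hβ0 : ∀ j' ∈ Finset.range n, j' ≠ j → β j' = 0 := by
    intro j' hj' hne
    rw [← hcoeff' j' hj', hGeq, coeff_C_mul, coeff_X_pow, if_neg, mul_zero]
    rw [hij]
    exact fun hc' => hne (hpinj hc')
  -- g formula
  have hgform : ∀ x : F, g x = γ * x ^ (p ^ j) := by
    intro x
    rw [hg, Finset.sum_eq_single j]
    · rw [hβj]
    · intro b hb hbne
      rw [hβ0 b hb hbne, zero_mul]
    · intro hj''
      exact absurd hjn hj''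
  refine ⟨γ, hγne, j, Nat.le_pred_of_lt hjn', hgform, ?_⟩
  -- f formula
  intro x
  rcases eq_or_ne x 0 with rfl | hx
  · have hz : ∀ k, (0:F) ^ (p ^ k) = 0 := fun k => zero_pow (pow_pos hp.pos k).ne'
    simp [hf, hz]
  · have hx' : x⁻¹ ≠ 0 := inv_ne_zero hx
    have h1 := h x⁻¹ hx'
    rw [hgform, inv_inv] at h1
    have h2 : f x = (γ * x⁻¹ ^ (p ^ j))⁻¹ := eq_inv_of_mul_eq_one_right h1
    rw [h2]
    simp [mul_inv, inv_pow, mul_comm]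
end
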